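/- Let Q be a symmetric n×n real matrix, c, v ∈ R^n, β > 0, and ζ = (σ,τ) with G(σ) = Q + 2 Diag(σ) positive definite and τ > 0. If z̄ = G(σ)⁻¹(c − τ v + σ) satisfies z̄ ∈ {0,1}^n and vᵀ z̄ = V_c and the pair (z̄, ζ) is a critical (KKT) point of the total complementary function Ξ_β, then z̄ is a global minimizer of P_q(z) = (1/2) zᵀ Q z − cᵀ z over the knapsack set {z ∈ {0,1}^n : vᵀ z ≤ V_c}. -/

import Mathlib

open Matrix

/-- Complementary-dual principle: a KKT point of `Ξ_β` with binary analytic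
solution `z̄ = G(σ)⁻¹ψ` and `vᵀz̄ = V_c` yields a global minimizer of the
quadratic knapsack problem. -/
theorem kkt_point_global_min_knapsack (n : ℕ) (β : ℝ) (hβ : 0 < β)
    (Q : Matrix (Fin n) (Fin n) ℝ) (hQ : Q.IsSymm)
    (c v σ : Fin n → ℝ) (τ Vc : ℝ)
    (G : Matrix (Fin n) (Fin n) ℝ) (hG : G = Q + 2 • Matrix.diagonal σ)
    (hpd : G.PosDef) (hτ : 0 < τ)
    (ψ : Fin n → ℝ) (hψ : ψ = fun i => c i - τ * v i + σ i)
    (zbar : Fin n → ℝ) (hz : zbar = G⁻¹.mulVec ψ)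
    (hbin : ∀ i, zbar i = 0 ∨ zbar i = 1)
    (hvol : v ⬝ᵥ zbar = Vc)
    -- KKT stationarity in z : ∇_z Ξ_β = 0
    (hstat_z : G.mulVec zbar = ψ)
    -- KKT stationarity in σ : ∇_σ Ξ_β = 0
    (hstat_σ : ∀ i, zbar i ^ 2 - zbar i - σ i / β = 0)
    -- complementarity conditions
    (hfeas : v ⬝ᵥ zbar ≤ Vc) (hτ0 : 0 ≤ τ) (hcomp : τ * (v ⬝ᵥ zbar - Vc) = 0)
    (Pq : (Fin n → ℝ) → ℝ)
    (hPq : Pq = fun z => (1 / 2) * (z ⬝ᵥ Q.mulVec z) - c ⬝ᵥ z) :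
    ∀ z : Fin n → ℝ, (∀ i, z i = 0 ∨ z i = 1) → v ⬝ᵥ z ≤ Vc →
      Pq zbar ≤ Pq z := by
  have hσ0 : σ = 0 := by
    funext i
    have h := hstat_σ i
    have hb := hβ.ne'
    rcases hbin i with h' | h' <;> rw [h'] at h <;> field_simp at h <;>
      simpa using h
  have hGQ : G = Q := by rw [hG, hσ0]; ext i j; by_cases hij : i = j <;> simp [Matrix.diagonal_apply, hij]
  have hQpd : Q.PosDef := hGQ ▸ hpd
  have hQz : Q.mulVec zbar = fun i => c i - τ * v i := by
    rw [← hGQ, hstat_z, hψ]; funext i; simp [hσ0]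
  have hsym : ∀ x y : Fin n → ℝ, x ⬝ᵥ Q.mulVec y = y ⬝ᵥ Q.mulVec x := by
    intro x y
    rw [Matrix.dotProduct_mulVec, ← Matrix.mulVec_transpose, hQ.eq,
      dotProduct_comm]
  intro z hzbin hzle
  have hpsd : 0 ≤ (z - zbar) ⬝ᵥ Q.mulVec (z - zbar) :=
    by simpa using hQpd.posSemidef.dotProduct_mulVec_nonneg (z - zbar)
  have hexp : (z - zbar) ⬝ᵥ Q.mulVec (z - zbar) =
      z ⬝ᵥ Q.mulVec z - 2 * (z ⬝ᵥ Q.mulVec zbar) + zbar ⬝ᵥ Q.mulVec zbar := by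
    rw [Matrix.mulVec_sub, sub_dotProduct, dotProduct_sub,
      dotProduct_sub, hsym zbar z]
    ring
  have h1 : z ⬝ᵥ Q.mulVec zbar = c ⬝ᵥ z - τ * (v ⬝ᵥ z) := by
    rw [hQz]
    simp [dotProduct, mul_sub, sub_mul, Finset.sum_sub_distrib,
      Finset.mul_sum, mul_comm, mul_left_comm]
  have h2 : zbar ⬝ᵥ Q.mulVec zbar = c ⬝ᵥ zbar - τ * Vc := by
    rw [hQz, ← hvol]
    simp [dotProduct, mul_sub, sub_mul, Finset.sum_sub_distrib,
      Finset.mul_sum, mul_comm, mul_left_comm]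
  rw [hPq]
  simp only
  nlinarith [mul_le_mul_of_nonneg_left hzle hτ0, hpsd, hexp, h1, h2]
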